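/- Let B₁,…,B_r be connected building sets on pairwise disjoint finite sets S₁,…,S_r of positive integers satisfying max S_i < min S_j whenever i < j, and let B be the combined connected building set on S = S₁ ∪ ⋯ ∪ S_r. Then the B-trees are exactly the trees obtained as follows: choose j ∈ {1,…,r} and a B_i-tree T_i for each i = 1,…,r, and connect the root of each T_k with k ≠ j by an edge to the root of T_j (so the root of T_j becomes the root of T). Moreover, for such a tree T one has des(T) = (r − j) + Σ_{k=1}^r des(T_k). -/

import Mathlib

open scoped Classical

noncomputable section

/-- A rooted tree on the vertex set `S ⊆ ℕ`, encoded by its root and its parent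
function; edges are directed away from the root (so each non-root vertex `i`
carries the edge `(i, parent i)`, with `parent i` closer to the root).  The
parent function is normalized to be the identity outside `S` and at the root. -/
structure RTree (S : Finset ℕ) where
  root : ℕ
  root_mem : root ∈ S
  parent : ℕ → ℕ
  parent_out : ∀ i, i ∉ S → parent i = i
  parent_root : parent root = root
  parent_mem : ∀ i ∈ S, parent i ∈ S
  reach : ∀ i ∈ S, ∃ k, parent^[k] i = root

namespace RTree

variable {S : Finset ℕ}

/-- The set `T_{≤ i}` of descendants of `i` in `T` (including `i` itself). -/
def desc (T : RTree S) (i : ℕ) : Finset ℕ :=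
  S.filter fun j => ∃ k, T.parent^[k] j = i

/-- The depth of a vertex: its distance to the root. -/
def dp (T : RTree S) (x : ℕ) : ℕ :=
  sInf {k | T.parent^[k] x = T.root}

/-- The depth of the tree: the maximal depth of a vertex. -/
def depth (T : RTree S) : ℕ := S.sup T.dp

/-- The set of descent edges `(i, parent i)` with `i > parent i`, recorded by
the child endpoint `i`. -/
def desSet (T : RTree S) : Finset ℕ :=
  S.filter fun i => i ≠ T.root ∧ T.parent i < i

/-- The number of descents of `T`. -/
def des (T : RTree S) : ℕ := T.desSet.card

/-- The major index of `T`: the sum, over all descent edges `(i,j)` of `T`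
(with `j = parent i`), of `depth T - dp j`, i.e. of the minimal rank of `j`. -/
def maj (T : RTree S) : ℕ :=
  ∑ i ∈ T.desSet, (T.depth - T.dp (T.parent i))

/-- The statistic `μ(T)`: the sum, over all edges `(i,j)` of `T`
(with `j = parent i`), of `depth T - dp j`. -/
def mu (T : RTree S) : ℕ :=
  ∑ i ∈ S.filter (fun i => i ≠ T.root), (T.depth - T.dp (T.parent i))

end RTree

/-- `B` is a building set on the finite ground set `S`. -/
def IsBuildingSet (S : Finset ℕ) (B : Finset (Finset ℕ)) : Prop :=
  (∀ I ∈ B, I ⊆ S ∧ I.Nonempty) ∧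
  (∀ I ∈ B, ∀ J ∈ B, (I ∩ J).Nonempty → I ∪ J ∈ B) ∧
  (∀ i ∈ S, ({i} : Finset ℕ) ∈ B)

/-- `B` is a connected building set on `S`. -/
def IsConnBuildingSet (S : Finset ℕ) (B : Finset (Finset ℕ)) : Prop :=
  IsBuildingSet S B ∧ S ∈ B

/-- `T` is a `B`-tree: all descendant sets belong to `B`, and no union of
descendant sets of `k ≥ 2` pairwise incomparable nodes belongs to `B`. -/
def IsBTree (S : Finset ℕ) (B : Finset (Finset ℕ)) (T : RTree S) : Prop :=
  (∀ i ∈ S, T.desc i ∈ B) ∧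
  ∀ I : Finset ℕ, I ⊆ S → 2 ≤ I.card →
    (∀ i ∈ I, ∀ j ∈ I, i ≠ j → i ∉ T.desc j ∧ j ∉ T.desc i) →
    I.biUnion T.desc ∉ B

/-- `T` is the rooted tree obtained from the trees `Ts k` by connecting the
root of each `Ts k`, `k ≠ j`, by an edge to the root of `Ts j` (the root of
`Ts j` becoming the root of `T`). -/
def Glue {r : ℕ} {S : Fin r → Finset ℕ} {Sc : Finset ℕ}
    (j : Fin r) (Ts : ∀ k, RTree (S k)) (T : RTree Sc) : Prop :=
  T.root = (Ts j).root ∧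
  (∀ k : Fin r, k ≠ j → T.parent (Ts k).root = (Ts j).root) ∧
  ∀ k : Fin r, ∀ x ∈ S k, x ≠ (Ts k).root → T.parent x = (Ts k).parent x

namespace RTree
variable {S : Finset ℕ} (T : RTree S)

lemma mem_desc {i y : ℕ} : y ∈ T.desc i ↔ y ∈ S ∧ ∃ k, T.parent^[k] y = i := by
  simp [desc]
lemma mem_desc_self {i : ℕ} (hi : i ∈ S) : i ∈ T.desc i :=
  T.mem_desc.2 ⟨hi, 0, rfl⟩
lemma desc_subset (i : ℕ) : T.desc i ⊆ S := Finset.filter_subset _ _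
lemma desc_root : T.desc T.root = S := by
  ext x
  simp only [mem_desc, and_iff_left_iff_imp]
  exact fun hx => T.reach x hx
lemma root_not_mem_desc {i : ℕ} (hi : i ≠ T.root) : T.root ∉ T.desc i := by
  rw [mem_desc]
  rintro ⟨-, k, hk⟩
  rw [Function.iterate_fixed T.parent_root] at hk
  exact hi hk.symm
lemma iterate_mem {y : ℕ} (hy : y ∈ S) (k : ℕ) : T.parent^[k] y ∈ S := by
  induction k with
  | zero => exact hy
  | succ k ih => rw [Function.iterate_succ_apply']; exact T.parent_mem _ ih
end RTree

section Aux
variable {r : ℕ} {S : Fin r → Finset ℕ} {Sc : Finset ℕ}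

lemma block_unique (hdisj : ∀ i j : Fin r, i ≠ j → Disjoint (S i) (S j))
    {x : ℕ} {k k' : Fin r} (h : x ∈ S k) (h' : x ∈ S k') : k = k' := by
  by_contra hne
  exact (Finset.disjoint_left.1 (hdisj k k' hne)) h h'

lemma glue_desc (hdisj : ∀ i j : Fin r, i ≠ j → Disjoint (S i) (S j))
    (hSc : Sc = Finset.univ.biUnion S)
    {j : Fin r} {Ts : ∀ k, RTree (S k)} {T : RTree Sc}
    (hg : Glue j Ts T) (k : Fin r) {i : ℕ} (hi : i ∈ S k) (hir : i ≠ T.root) :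
    T.desc i = (Ts k).desc i := by
  obtain ⟨hroot, hgp, hp⟩ := hg
  have hsub : ∀ m : Fin r, S m ⊆ Sc := by
    intro m x hx
    rw [hSc]; exact Finset.mem_biUnion.2 ⟨m, Finset.mem_univ m, hx⟩
  have fwd : ∀ m : ℕ, ∀ y, y ∈ Sc → T.parent^[m] y = i →
      y ∈ S k ∧ ∃ m', (Ts k).parent^[m'] y = i := by
    intro m
    induction m with
    | zero => intro y hy h0; simp only [Function.iterate_zero, id] at h0
              exact ⟨h0 ▸ hi, 0, h0⟩
    | succ m ih =>
      intro y hy h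
      rw [Function.iterate_succ_apply] at h
      obtain ⟨k', -, hyk'⟩ := Finset.mem_biUnion.1 (hSc ▸ hy)
      by_cases hyr : y = (Ts k').root
      · by_cases hkj : k' = j
        · subst hkj
          have : y = T.root := hroot ▸ hyr
          rw [this, T.parent_root] at h
          exact ih y hy (this ▸ h)
        · rw [hyr, hgp k' hkj] at h
          have hres := ih _ (hsub j (Ts j).root_mem) h
          have hkj' : k = j := block_unique hdisj hres.1 (Ts j).root_mem
          subst hkj'
          obtain ⟨-, m', hm'⟩ := hres
          rw [Function.iterate_fixed (Ts k).parent_root] at hm'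
          exact absurd (hroot.trans hm').symm hir
      · rw [hp k' y hyk' hyr] at h
        have hpm : (Ts k').parent y ∈ S k' := (Ts k').parent_mem y hyk'
        have hres := ih _ (hsub k' hpm) h
        have hkk : k' = k := block_unique hdisj hpm hres.1
        subst hkk
        obtain ⟨-, m', hm'⟩ := hres
        exact ⟨hyk', m' + 1, by rw [Function.iterate_succ_apply]; exact hm'⟩
  have rev : ∀ m : ℕ, ∀ y ∈ S k, (Ts k).parent^[m] y = i →
      ∃ m', T.parent^[m'] y = i := by
    intro m
    induction m with
    | zero => intro y _ h0; exact ⟨0, h0⟩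
    | succ m ih =>
      intro y hy h
      rw [Function.iterate_succ_apply] at h
      by_cases hyr : y = (Ts k).root
      · rw [hyr, (Ts k).parent_root] at h
        exact ih y (hyr ▸ (Ts k).root_mem) (hyr ▸ h)
      · obtain ⟨m', hm'⟩ := ih _ ((Ts k).parent_mem y hy) h
        exact ⟨m' + 1, by rw [Function.iterate_succ_apply, hp k y hy hyr]; exact hm'⟩
  ext y
  rw [T.mem_desc, (Ts k).mem_desc]
  constructor
  · rintro ⟨hy, m, hm⟩
    obtain ⟨h1, h2⟩ := fwd m y hy hm
    exact ⟨h1, h2⟩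
  · rintro ⟨hy, m, hm⟩
    exact ⟨hsub k hy, rev m y hy hm⟩

lemma mem_Bc {B : Fin r → Finset (Finset ℕ)} {Bc : Finset (Finset ℕ)}
    (hBc : Bc = Finset.univ.biUnion B ∪ {Sc}) {X : Finset ℕ} :
    X ∈ Bc ↔ (∃ k, X ∈ B k) ∨ X = Sc := by
  subst hBc
  simp [Finset.mem_union, Finset.mem_biUnion]
  exact or_comm

lemma glue_isBTree
    {B : Fin r → Finset (Finset ℕ)} {Bc : Finset (Finset ℕ)}
    (hdisj : ∀ i j : Fin r, i ≠ j → Disjoint (S i) (S j))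
    (hB : ∀ i, IsConnBuildingSet (S i) (B i))
    (hSc : Sc = Finset.univ.biUnion S)
    (hBc : Bc = Finset.univ.biUnion B ∪ {Sc})
    {j : Fin r} {Ts : ∀ k, RTree (S k)} {T : RTree Sc}
    (hT : ∀ k, IsBTree (S k) (B k) (Ts k)) (hg : Glue j Ts T) :
    IsBTree Sc Bc T := by
  have hScBc : Sc ∈ Bc := (mem_Bc hBc).2 (Or.inr rfl)
  constructor
  · intro i hi
    obtain ⟨k, -, hik⟩ := Finset.mem_biUnion.1 (hSc ▸ hi)
    by_cases hir : i = T.root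
    · rw [hir, T.desc_root]; exact hScBc
    · rw [glue_desc hdisj hSc hg k hik hir]
      exact (mem_Bc hBc).2 (Or.inl ⟨k, (hT k).1 i hik⟩)
  · intro I hIS hcard hinc hmem
    -- root not in I
    have hroot_not : T.root ∉ I := by
      intro hrI
      obtain ⟨i, hiI, hine⟩ : ∃ i ∈ I, i ≠ T.root := by
        obtain ⟨a, haI, b, hbI, hab⟩ := Finset.one_lt_card.1 hcard
        by_cases ha : a = T.root
        · exact ⟨b, hbI, fun h => hab (ha.trans h.symm ▸ rfl)⟩
        · exact ⟨a, haI, ha⟩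
      have := (hinc i hiI T.root hrI hine).1
      exact this (T.mem_desc.2 ⟨hIS hiI, T.reach i (hIS hiI)⟩)
    rcases (mem_Bc hBc).1 hmem with ⟨m, hm⟩ | hscc
    · -- all of I in S m
      have hIm : ∀ i ∈ I, i ∈ S m := by
        intro i hiI
        have hi : i ∈ T.desc i := T.mem_desc_self (hIS hiI)
        have : i ∈ I.biUnion T.desc := Finset.mem_biUnion.2 ⟨i, hiI, hi⟩
        exact ((hB m).1.1 _ hm).1 this
      have hdesc_eq : ∀ i ∈ I, T.desc i = (Ts m).desc i := fun i hiI =>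
        glue_desc hdisj hSc hg m (hIm i hiI) (fun h => hroot_not (h ▸ hiI))
      have : I.biUnion (Ts m).desc ∈ B m := by
        have : I.biUnion T.desc = I.biUnion (Ts m).desc :=
          Finset.biUnion_congr rfl hdesc_eq
        rwa [← this]
      refine (hT m).2 I (fun i hiI => hIm i hiI) hcard ?_ this
      intro a haI b hbI hab
      have := hinc a haI b hbI hab
      rw [hdesc_eq a haI, hdesc_eq b hbI] at this
      exact this
    · -- union = Sc contains the root, impossible
      have : T.root ∈ I.biUnion T.desc := by rw [hscc]; exact T.root_mem
      obtain ⟨i, hiI, hdi⟩ := Finset.mem_biUnion.1 this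
      exact T.root_not_mem_desc (fun h => hroot_not (h ▸ hiI)) hdi

end Aux

section Des
variable {r : ℕ} {S : Fin r → Finset ℕ} {Sc : Finset ℕ}

lemma glue_des (hdisj : ∀ i j : Fin r, i ≠ j → Disjoint (S i) (S j))
    (horder : ∀ i j : Fin r, i < j → ∀ x ∈ S i, ∀ y ∈ S j, x < y)
    (hSc : Sc = Finset.univ.biUnion S)
    {j : Fin r} {Ts : ∀ k, RTree (S k)} {T : RTree Sc}
    (hg : Glue j Ts T) :
    T.des = (r - 1 - (j : ℕ)) + ∑ k : Fin r, (Ts k).des := by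
  obtain ⟨hroot, hgp, hp⟩ := hg
  have hrootj : T.root ∈ S j := hroot ▸ (Ts j).root_mem
  have key : ∀ k : Fin r,
      ((S k).filter fun i => i ≠ T.root ∧ T.parent i < i).card
        = (if j < k then 1 else 0) + (Ts k).des := by
    intro k
    by_cases hkj : k = j
    · subst hkj
      have heq : ((S k).filter fun i => i ≠ T.root ∧ T.parent i < i) = (Ts k).desSet := by
        ext i
        simp only [Finset.mem_filter, RTree.desSet, hroot]
        constructor
        · rintro ⟨hi, hir, hlt⟩
          exact ⟨hi, hir, by rwa [← hp k i hi hir]⟩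
        · rintro ⟨hi, hir, hlt⟩
          exact ⟨hi, hir, by rwa [hp k i hi hir]⟩
      rw [heq, if_neg (lt_irrefl k), zero_add]
      rfl
    · have hirT : ∀ i ∈ S k, i ≠ T.root := fun i hik h =>
        hkj (block_unique hdisj hik (h ▸ hrootj))
      by_cases hjk : j < k
      · have heq : ((S k).filter fun i => i ≠ T.root ∧ T.parent i < i)
            = insert (Ts k).root (Ts k).desSet := by
          ext i
          simp only [Finset.mem_filter, Finset.mem_insert, RTree.desSet]
          constructor
          · rintro ⟨hik, hir, hlt⟩
            by_cases hirk : i = (Ts k).root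
            · exact Or.inl hirk
            · exact Or.inr ⟨hik, hirk, by rwa [← hp k i hik hirk]⟩
          · rintro (heq | ⟨hik, hirk, hlt⟩)
            · refine ⟨heq ▸ (Ts k).root_mem, hirT i (heq ▸ (Ts k).root_mem), ?_⟩
              rw [heq, hgp k hkj]
              exact heq ▸ horder j k hjk (Ts j).root (Ts j).root_mem
                (Ts k).root (Ts k).root_mem
            · exact ⟨hik, hirT i hik, by rwa [hp k i hik hirk]⟩
        rw [heq, Finset.card_insert_of_notMem, if_pos hjk]
        · rw [add_comm]; rfl
        · simp only [RTree.desSet, Finset.mem_filter]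
          rintro ⟨-, h, -⟩; exact h rfl
      · have hkltj : k < j := lt_of_le_of_ne (le_of_not_gt hjk) hkj
        have heq : ((S k).filter fun i => i ≠ T.root ∧ T.parent i < i) = (Ts k).desSet := by
          ext i
          simp only [Finset.mem_filter, RTree.desSet]
          constructor
          · rintro ⟨hik, hir, hlt⟩
            have hirk : i ≠ (Ts k).root := by
              intro h
              rw [h, hgp k hkj] at hlt
              have := horder k j hkltj (Ts k).root (Ts k).root_mem
                (Ts j).root (Ts j).root_mem
              omega
            exact ⟨hik, hirk, by rwa [← hp k i hik hirk]⟩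
          · rintro ⟨hik, hirk, hlt⟩
            exact ⟨hik, hirT i hik, by rwa [hp k i hik hirk]⟩
        rw [heq, if_neg hjk, zero_add]
        rfl
  subst hSc
  have hdes : T.des = ∑ k : Fin r, ((S k).filter fun i => i ≠ T.root ∧ T.parent i < i).card := by
    rw [RTree.des, RTree.desSet, Finset.filter_biUnion]
    exact Finset.card_biUnion fun x _ y _ hxy =>
      Disjoint.mono (Finset.filter_subset _ _) (Finset.filter_subset _ _) (hdisj x y hxy)
  rw [hdes]
  simp only [key]
  rw [Finset.sum_add_distrib]
  congr 1
  rw [← Finset.card_filter]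
  have hIoi : (Finset.univ.filter fun k : Fin r => j < k) = Finset.Ioi j := by
    ext k; simp [Finset.mem_Ioi]
  rw [hIoi, Fin.card_Ioi]

end Des

section Fwd
variable {r : ℕ} {S : Fin r → Finset ℕ} {Sc : Finset ℕ}

lemma reach_aux {Sk : Finset ℕ} (T : RTree Sc) (ρk : ℕ)
    (hstep : ∀ x ∈ Sk, x ≠ ρk → T.parent x ∈ Sk) :
    ∀ m, ∀ x ∈ Sk, T.parent^[m] x = ρk →
      ∃ m', (fun x => if x ∈ Sk ∧ x ≠ ρk then T.parent x else x)^[m'] x = ρk := by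
  intro m
  induction m with
  | zero => intro x _ h; exact ⟨0, h⟩
  | succ m ih =>
    intro x hx h
    by_cases hxρ : x = ρk
    · exact ⟨0, hxρ⟩
    · rw [Function.iterate_succ_apply] at h
      obtain ⟨m', hm'⟩ := ih (T.parent x) (hstep x hx hxρ) h
      refine ⟨m' + 1, ?_⟩
      rw [Function.iterate_succ_apply]
      have hb : (if x ∈ Sk ∧ x ≠ ρk then T.parent x else x) = T.parent x :=
        if_pos ⟨hx, hxρ⟩
      rw [hb]; exact hm'

def buildTree (T : RTree Sc) (Sk : Finset ℕ) (ρk : ℕ)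
    (hρ : ρk ∈ Sk) (hstep : ∀ x ∈ Sk, x ≠ ρk → T.parent x ∈ Sk)
    (hreach : ∀ x ∈ Sk, ∃ m, T.parent^[m] x = ρk) : RTree Sk where
  root := ρk
  root_mem := hρ
  parent := fun x => if x ∈ Sk ∧ x ≠ ρk then T.parent x else x
  parent_out := fun i hi => if_neg (fun h => hi h.1)
  parent_root := if_neg (fun h => h.2 rfl)
  parent_mem := by
    intro x hx
    show (if x ∈ Sk ∧ x ≠ ρk then T.parent x else x) ∈ Sk
    by_cases hxρ : x = ρk
    · rw [if_neg (fun h : x ∈ Sk ∧ x ≠ ρk => h.2 hxρ)]; exact hx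
    · rw [if_pos ⟨hx, hxρ⟩]; exact hstep x hx hxρ
  reach := by
    intro x hx
    obtain ⟨m, hm⟩ := hreach x hx
    exact reach_aux T ρk hstep m x hx hm

lemma forward
    {B : Fin r → Finset (Finset ℕ)} {Bc : Finset (Finset ℕ)}
    (hdisj : ∀ i j : Fin r, i ≠ j → Disjoint (S i) (S j))
    (hB : ∀ i, IsConnBuildingSet (S i) (B i))
    (hSc : Sc = Finset.univ.biUnion S)
    (hBc : Bc = Finset.univ.biUnion B ∪ {Sc})
    {T : RTree Sc} (hT : IsBTree Sc Bc T) :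
    ∃ (j : Fin r) (Ts : ∀ k, RTree (S k)),
      (∀ k, IsBTree (S k) (B k) (Ts k)) ∧ Glue j Ts T := by
  have hsub : ∀ m : Fin r, S m ⊆ Sc := by
    intro m x hx
    rw [hSc]; exact Finset.mem_biUnion.2 ⟨m, Finset.mem_univ m, hx⟩
  have hbi : ∀ x ∈ Sc, ∃ k, x ∈ S k := by
    intro x hx
    rw [hSc] at hx
    obtain ⟨k, -, hk⟩ := Finset.mem_biUnion.1 hx
    exact ⟨k, hk⟩
  obtain ⟨j, hrootj⟩ := hbi T.root T.root_mem
  have desc_block : ∀ k : Fin r, ∀ x ∈ S k, x ≠ T.root →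
      T.desc x ∈ B k ∧ T.desc x ⊆ S k := by
    intro k x hx hxr
    have hmem := hT.1 x (hsub k hx)
    rcases (mem_Bc hBc).1 hmem with ⟨m, hm⟩ | hsc
    · have hsubm := ((hB m).1.1 _ hm).1
      have hxm : x ∈ S m := hsubm (T.mem_desc_self (hsub k hx))
      have hmk : m = k := block_unique hdisj hxm hx
      subst hmk
      exact ⟨hm, hsubm⟩
    · exfalso
      exact T.root_not_mem_desc hxr (by rw [hsc]; exact T.root_mem)
  have parent_block : ∀ k : Fin r, ∀ x ∈ S k, x ≠ T.root → T.parent x ≠ T.root →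
      T.parent x ∈ S k := by
    intro k x hx hxr hpr
    have hpx : T.parent x ∈ Sc := T.parent_mem x (hsub k hx)
    obtain ⟨k', hk'⟩ := hbi _ hpx
    have hxd : x ∈ T.desc (T.parent x) :=
      T.mem_desc.2 ⟨hsub k hx, 1, by rw [Function.iterate_one]⟩
    have hxk' : x ∈ S k' := (desc_block k' _ hk' hpr).2 hxd
    have hkk : k' = k := block_unique hdisj hxk' hx
    rw [← hkk]; exact hk'
  have hchoice : ∀ k : Fin r, ∃ c, c ∈ S k ∧ (k = j → c = T.root) ∧
      (k ≠ j → T.parent c = T.root ∧ T.desc c = S k ∧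
        ∀ x ∈ S k, T.parent x = T.root → x = c) := by
    intro k
    by_cases hkj : k = j
    · exact ⟨T.root, by rw [hkj]; exact hrootj, fun _ => rfl, fun h => absurd hkj h⟩
    · set C := (S k).filter fun c => T.parent c = T.root with hC
      have hSkne : (S k).Nonempty := ((hB k).1.1 _ (hB k).2).2
      have hnotroot : ∀ x ∈ S k, x ≠ T.root := fun x hx h =>
        hkj (block_unique hdisj hx (h ▸ hrootj))
      have hcover : ∀ z ∈ S k, ∃ c ∈ C, z ∈ T.desc c := by
        intro z hz
        have hzSc := hsub k hz
        have hex := T.reach z hzSc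
        have hm0 : T.parent^[Nat.find hex] z = T.root := Nat.find_spec hex
        have hmpos : 0 < Nat.find hex := by
          rcases Nat.eq_zero_or_pos (Nat.find hex) with h | h
          · exfalso; rw [h] at hm0; exact hnotroot z hz hm0
          · exact h
        set c := T.parent^[Nat.find hex - 1] z with hc
        have hcSc : c ∈ Sc := T.iterate_mem hzSc _
        have hparc : T.parent c = T.root := by
          have h1 : T.parent^[(Nat.find hex - 1) + 1] z = T.root := by
            rw [Nat.sub_add_cancel hmpos]; exact hm0
          rwa [Function.iterate_succ_apply'] at h1
        have hcnr : c ≠ T.root := fun h =>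
          Nat.find_min hex (Nat.sub_lt hmpos one_pos) h
        have hzc : z ∈ T.desc c := T.mem_desc.2 ⟨hzSc, Nat.find hex - 1, rfl⟩
        obtain ⟨k'', hck⟩ := hbi _ hcSc
        have hzk'' : z ∈ S k'' := (desc_block k'' c hck hcnr).2 hzc
        have hk'' : k'' = k := block_unique hdisj hzk'' hz
        exact ⟨c, Finset.mem_filter.2 ⟨hk'' ▸ hck, hparc⟩, hzc⟩
      have hincomp : ∀ c ∈ C, ∀ c' ∈ C, c ≠ c' → c ∉ T.desc c' := by
        intro c hc c' hc' hne hmem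
        obtain ⟨hcS, hcp⟩ := Finset.mem_filter.1 hc
        obtain ⟨hcS', hcp'⟩ := Finset.mem_filter.1 hc'
        obtain ⟨-, m, hm⟩ := T.mem_desc.1 hmem
        cases m with
        | zero => exact hne (by simpa using hm)
        | succ m =>
          rw [Function.iterate_succ_apply, hcp,
            Function.iterate_fixed T.parent_root] at hm
          exact hnotroot c' hcS' hm.symm
      have hcard : C.card ≤ 1 := by
        by_contra h
        push_neg at h
        have hbiU : C.biUnion T.desc = S k := by
          apply Finset.Subset.antisymm
          · intro y hy
            obtain ⟨c, hc, hyc⟩ := Finset.mem_biUnion.1 hy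
            obtain ⟨hcS, -⟩ := Finset.mem_filter.1 hc
            exact (desc_block k c hcS (hnotroot c hcS)).2 hyc
          · intro z hz
            obtain ⟨c, hc, hzc⟩ := hcover z hz
            exact Finset.mem_biUnion.2 ⟨c, hc, hzc⟩
        refine hT.2 C (fun c hc => hsub k (Finset.mem_filter.1 hc).1) h ?_ ?_
        · intro a ha b hb hab
          exact ⟨hincomp a ha b hb hab, hincomp b hb a ha (Ne.symm hab)⟩
        · rw [hbiU]
          exact (mem_Bc hBc).2 (Or.inl ⟨k, (hB k).2⟩)
      obtain ⟨z, hz⟩ := hSkne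
      obtain ⟨c, hcC, -⟩ := hcover z hz
      have huniq : ∀ x ∈ C, x = c := fun x hx => Finset.card_le_one.1 hcard x hx c hcC
      obtain ⟨hcS, hcp⟩ := Finset.mem_filter.1 hcC
      refine ⟨c, hcS, fun h => absurd h hkj, fun _ => ⟨hcp, ?_, ?_⟩⟩
      · apply Finset.Subset.antisymm (desc_block k c hcS (hnotroot c hcS)).2
        intro z' hz'
        obtain ⟨c', hc'C, hzc'⟩ := hcover z' hz'
        exact (huniq c' hc'C) ▸ hzc'
      · intro x hx hpx
        exact huniq x (Finset.mem_filter.2 ⟨hx, hpx⟩)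
  choose ρ hρS hρj hρk using hchoice
  have hρjr : ρ j = T.root := hρj j rfl
  have hstep : ∀ k : Fin r, ∀ x ∈ S k, x ≠ ρ k → T.parent x ∈ S k := by
    intro k x hx hxρ
    by_cases hkj : k = j
    · subst hkj
      have hxr : x ≠ T.root := hρjr ▸ hxρ
      by_cases hpr : T.parent x = T.root
      · rw [hpr]; exact hrootj
      · exact parent_block _ x hx hxr hpr
    · have hxr : x ≠ T.root := fun h => hkj (block_unique hdisj hx (h ▸ hrootj))
      have hpr : T.parent x ≠ T.root := fun h => hxρ ((hρk k hkj).2.2 x hx h)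
      exact parent_block k x hx hxr hpr
  have hreach : ∀ k : Fin r, ∀ x ∈ S k, ∃ m, T.parent^[m] x = ρ k := by
    intro k x hx
    by_cases hkj : k = j
    · subst hkj; rw [hρjr]; exact T.reach x (hsub _ hx)
    · obtain ⟨-, hdesc, -⟩ := hρk k hkj
      have hxd : x ∈ T.desc (ρ k) := by rw [hdesc]; exact hx
      exact (T.mem_desc.1 hxd).2
  set Ts : ∀ k, RTree (S k) :=
    fun k => buildTree T (S k) (ρ k) (hρS k) (hstep k) (hreach k) with hTs
  have hroot_eq : ∀ k, (Ts k).root = ρ k := fun k => rfl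
  have hpar_eq : ∀ k x, (Ts k).parent x
      = if x ∈ S k ∧ x ≠ ρ k then T.parent x else x := fun k x => rfl
  have hglue : Glue j Ts T := by
    refine ⟨by rw [hroot_eq j, hρjr], ?_, ?_⟩
    · intro k hk
      rw [hroot_eq, hroot_eq, hρjr]
      exact (hρk k hk).1
    · intro k x hx hxρ
      rw [hpar_eq, if_pos ⟨hx, hxρ⟩]
  have hdesc_eq : ∀ k : Fin r, ∀ i ∈ S k, i ≠ T.root → T.desc i = (Ts k).desc i :=
    fun k i hi hir => glue_desc hdisj hSc hglue k hi hir
  refine ⟨j, Ts, ?_, hglue⟩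
  intro k
  constructor
  · intro i hi
    by_cases hir : i = T.root
    · have hkj : k = j := block_unique hdisj (by rw [← hir]; exact hi) hrootj
      have hirk : i = (Ts k).root := by rw [hroot_eq, hkj, hρjr, hir]
      rw [hirk, (Ts k).desc_root]
      exact (hB k).2
    · rw [← hdesc_eq k i hi hir]
      exact (desc_block k i hi hir).1
  · intro I hIS hcard hinc hmem
    have hrootnotI : T.root ∉ I := by
      intro hrI
      have hkj : k = j := block_unique hdisj (hIS hrI) hrootj
      obtain ⟨i, hiI, hine⟩ : ∃ i ∈ I, i ≠ T.root := by
        obtain ⟨a, haI, b, hbI, hab⟩ := Finset.one_lt_card.1 hcard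
        by_cases ha : a = T.root
        · exact ⟨b, hbI, fun h => hab (ha.trans h.symm ▸ rfl)⟩
        · exact ⟨a, haI, ha⟩
      have hre : (Ts k).root = T.root := by rw [hroot_eq, hkj, hρjr]
      have : i ∈ (Ts k).desc T.root := by
        rw [← hre, (Ts k).desc_root]; exact hIS hiI
      exact (hinc i hiI T.root hrI hine).1 this
    have hner : ∀ i ∈ I, i ≠ T.root := fun i hi h => hrootnotI (h ▸ hi)
    have heq : ∀ i ∈ I, T.desc i = (Ts k).desc i :=
      fun i hi => hdesc_eq k i (hIS hi) (hner i hi)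
    refine hT.2 I (fun i hi => hsub k (hIS hi)) hcard ?_ ?_
    · intro a ha b hb hab
      have h2 := hinc a ha b hb hab
      rw [heq b hb, heq a ha]
      exact h2
    · rw [Finset.biUnion_congr rfl heq]
      exact (mem_Bc hBc).2 (Or.inl ⟨k, hmem⟩)

end Fwd


/-- Let `B₁, …, B_r` be connected building sets on pairwise
disjoint sets `S₁, …, S_r` with `max Sᵢ < min Sⱼ` for `i < j`, and let `B` be
the combined connected building set on `S = ⋃ Sᵢ`.  The `B`-trees are exactly
the trees obtained by choosing `j` and `Bᵢ`-trees `Tᵢ` and connecting the root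
of each `T_k`, `k ≠ j`, to the root of `T_j`; moreover such a tree has
`des T = (r − j) + ∑ₖ des T_k` (here `j` is `0`-indexed, so `r − j` becomes
`r − 1 − j`). -/
theorem combined_building_set_trees
    (r : ℕ) (hr : 0 < r)
    (S : Fin r → Finset ℕ) (B : Fin r → Finset (Finset ℕ))
    (hpos : ∀ i, ∀ x ∈ S i, 0 < x)
    (hdisj : ∀ i j, i ≠ j → Disjoint (S i) (S j))
    (horder : ∀ i j : Fin r, i < j → ∀ x ∈ S i, ∀ y ∈ S j, x < y)
    (hB : ∀ i, IsConnBuildingSet (S i) (B i))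
    (Sc : Finset ℕ) (hSc : Sc = Finset.univ.biUnion S)
    (Bc : Finset (Finset ℕ)) (hBc : Bc = Finset.univ.biUnion B ∪ {Sc}) :
    (∀ T : RTree Sc, IsBTree Sc Bc T ↔
      ∃ (j : Fin r) (Ts : ∀ k, RTree (S k)),
        (∀ k, IsBTree (S k) (B k) (Ts k)) ∧ Glue j Ts T) ∧
    ∀ (T : RTree Sc) (j : Fin r) (Ts : ∀ k, RTree (S k)),
      (∀ k, IsBTree (S k) (B k) (Ts k)) → Glue j Ts T →
      T.des = (r - 1 - (j : ℕ)) + ∑ k : Fin r, (Ts k).des := by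
  constructor
  · intro T
    constructor
    · intro hT
      exact forward hdisj hB hSc hBc hT
    · rintro ⟨j, Ts, hTs, hg⟩
      exact glue_isBTree hdisj hB hSc hBc hTs hg
  · intro T j Ts hTs hg
    exact glue_des hdisj horder hSc hg
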